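/- Let (y_n)_{n≥0} be a sequence of points in [0,1) and (r_n)_{n≥0} a sequence of positive reals, and let B_n = {x ∈ ℝ : |x − y_n| < r_n}. If the set K({B_n}) = {x ∈ [0,1) : T_b^n(x) ∉ B_n for all but finitely many n ≥ 0} has Hausdorff dimension 1, then liminf_{n→∞} r_n = 0. -/

import Mathlib

open MeasureTheory Filter
open scoped ENNReal NNReal Topology

namespace Paper
noncomputable def Tmap (b : ℕ) : ℝ → ℝ := fun x => Int.fract ((b : ℝ) * x)

lemma tmap_iterate (b : ℕ) (x : ℝ) (hx : x ∈ Set.Ico (0:ℝ) 1) (n : ℕ) :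
    (Tmap b)^[n] x = Int.fract (x * (b:ℝ)^n) := by
  induction n with
  | zero => simp [Int.fract_eq_self.mpr ⟨hx.1, hx.2⟩]
  | succ n ih =>
    rw [Function.iterate_succ_apply', ih]
    show Int.fract ((b:ℝ) * Int.fract (x * (b:ℝ)^n)) = _
    have : (b:ℝ) * Int.fract (x * (b:ℝ)^n)
        = x * (b:ℝ)^(n+1) - ((b * ⌊x * (b:ℝ)^n⌋ : ℤ) : ℝ) := by
      rw [Int.fract]; push_cast; ring
    rw [this, Int.fract_sub_intCast]

lemma floor_nonneg_of_mem {x : ℝ} (hx : x ∈ Set.Ico (0:ℝ) 1) (B : ℝ) (hB : 0 < B) :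
    0 ≤ ⌊x * B⌋ :=
  Int.floor_nonneg.mpr (mul_nonneg hx.1 hB.le)

lemma floor_split (b : ℕ) (hb : 3 ≤ b) (x : ℝ) (hx : x ∈ Set.Ico (0:ℝ) 1) (L k : ℕ) :
    (⌊x * (b:ℝ)^(L+k)⌋).toNat
      = (⌊x * (b:ℝ)^L⌋).toNat * b^k + (⌊Int.fract (x * (b:ℝ)^L) * (b:ℝ)^k⌋).toNat := by
  have hbR : (0:ℝ) < b := by positivity
  have hBL : (0:ℝ) < (b:ℝ)^L := by positivity
  have hBk : (0:ℝ) < (b:ℝ)^k := by positivity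
  set u : ℝ := x * (b:ℝ)^L with hu
  have h1 : 0 ≤ ⌊u⌋ := floor_nonneg_of_mem hx _ hBL
  have h2 : 0 ≤ ⌊Int.fract u * (b:ℝ)^k⌋ := Int.floor_nonneg.mpr (mul_nonneg (Int.fract_nonneg u) hBk.le)
  have key : ⌊x * (b:ℝ)^(L+k)⌋ = ⌊Int.fract u * (b:ℝ)^k⌋ + ⌊u⌋ * (b:ℤ)^k := by
    have hx2 : x * (b:ℝ)^(L+k) = Int.fract u * (b:ℝ)^k + ((⌊u⌋ * (b:ℤ)^k : ℤ) : ℝ) := by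
      have := Int.floor_add_fract u
      push_cast
      rw [pow_add]
      nlinarith [this]
    rw [hx2, Int.floor_add_intCast]
  have h3 : 0 ≤ ⌊x * (b:ℝ)^(L+k)⌋ := floor_nonneg_of_mem hx _ (by positivity)
  have : ((⌊x * (b:ℝ)^(L+k)⌋).toNat : ℤ)
      = (((⌊x * (b:ℝ)^L⌋).toNat * b^k + (⌊Int.fract (x * (b:ℝ)^L) * (b:ℝ)^k⌋).toNat : ℕ) : ℤ) := by
    rw [← hu]
    push_cast [Int.toNat_of_nonneg h3, Int.toNat_of_nonneg h1, Int.toNat_of_nonneg h2]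
    rw [key]; push_cast; ring
  simp only [hu]
  exact_mod_cast this


lemma floor_lt_of_mem (b : ℕ) (hb : 3 ≤ b) {x : ℝ} (hx : x ∈ Set.Ico (0:ℝ) 1) (L : ℕ) :
    (⌊x * (b:ℝ)^L⌋).toNat < b^L := by
  have hBL : (0:ℝ) < (b:ℝ)^L := by positivity
  have h1 : 0 ≤ ⌊x * (b:ℝ)^L⌋ := floor_nonneg_of_mem hx _ hBL
  have h2 : ⌊x * (b:ℝ)^L⌋ < (b^L : ℕ) := by
    rw [Int.floor_lt]
    push_cast
    nlinarith [hx.2, hBL]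
  omega

lemma grid_subset_ball (b k : ℕ) (hb : 3 ≤ b) {δ ρ yn : ℝ} (hδ0 : 0 < δ)
    (hδhalf : δ ≤ 1/2) (hδρ : δ ≤ ρ) (hk : (4:ℝ)/(b:ℝ)^k ≤ δ)
    (hyn : yn ∈ Set.Ico (0:ℝ) 1) :
    ∃ u : ℕ, u + 1 ≤ b^k ∧
      Set.Ico ((u:ℝ)/(b:ℝ)^k) (((u:ℝ)+1)/(b:ℝ)^k) ⊆ Metric.ball yn ρ := by
  have hB : (0:ℝ) < (b:ℝ)^k := by positivity
  have hkB : (4:ℝ) ≤ δ * (b:ℝ)^k := by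
    rw [div_le_iff₀ hB] at hk; linarith
  set a : ℝ := if yn < 1/2 then yn else yn - δ with ha
  have ha0 : 0 ≤ a := by
    rw [ha]; split_ifs with h
    · exact hyn.1
    · push_neg at h; linarith
  have ha1 : a + δ ≤ 1 := by
    rw [ha]; split_ifs with h
    · linarith
    · linarith [hyn.2]
  have hsub : Set.Ioo a (a + δ) ⊆ Metric.ball yn ρ := by
    intro x hx
    rw [Metric.mem_ball, Real.dist_eq, abs_lt]
    rw [ha] at hx; rcases hx with ⟨hx1, hx2⟩
    split_ifs at hx1 hx2 with h <;> constructor <;> linarith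
  set T : ℤ := ⌈a * (b:ℝ)^k⌉ with hT
  have hT0 : 0 ≤ T := Int.ceil_nonneg (by positivity)
  refine ⟨T.toNat + 1, ?_, ?_⟩
  · -- (T.toNat + 1) + 1 ≤ b^k
    have h1 : (T:ℝ) < a * (b:ℝ)^k + 1 := Int.ceil_lt_add_one _
    have hTn : ((T.toNat : ℝ)) = (T:ℝ) := by exact_mod_cast Int.toNat_of_nonneg hT0
    have h2 : ((T.toNat:ℝ) + 1) + 1 < (b:ℝ)^k := by nlinarith
    have h3 : ((T.toNat + 1 + 1 : ℕ) : ℝ) < ((b^k : ℕ) : ℝ) := by push_cast; push_cast at h2; linarith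
    exact_mod_cast h3.le
  · intro x hx
    rcases hx with ⟨hx1, hx2⟩
    apply hsub
    have hle : a * (b:ℝ)^k ≤ T := Int.le_ceil _
    have hlt : (T:ℝ) < a * (b:ℝ)^k + 1 := Int.ceil_lt_add_one _
    have hTn : ((T.toNat : ℝ)) = (T:ℝ) := by exact_mod_cast Int.toNat_of_nonneg hT0
    rw [Set.mem_Ioo]
    rw [div_le_iff₀ hB] at hx1
    rw [lt_div_iff₀ hB] at hx2
    push_cast at hx1 hx2
    constructor
    · nlinarith
    · nlinarith


lemma mem_grid (b : ℕ) (hb : 3 ≤ b) {z : ℝ} (hz : z ∈ Set.Ico (0:ℝ) 1) (k : ℕ) :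
    z ∈ Set.Ico (((⌊z * (b:ℝ)^k⌋).toNat : ℝ)/(b:ℝ)^k)
      ((((⌊z * (b:ℝ)^k⌋).toNat : ℝ)+1)/(b:ℝ)^k) := by
  have hB : (0:ℝ) < (b:ℝ)^k := by positivity
  have h0 : 0 ≤ ⌊z * (b:ℝ)^k⌋ := floor_nonneg_of_mem hz _ hB
  have hcast : ((⌊z * (b:ℝ)^k⌋).toNat : ℝ) = ((⌊z * (b:ℝ)^k⌋ : ℤ) : ℝ) := by
    exact_mod_cast Int.toNat_of_nonneg h0
  rw [Set.mem_Ico, hcast]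
  constructor
  · rw [div_le_iff₀ hB]; exact Int.floor_le _
  · rw [lt_div_iff₀ hB]; exact Int.lt_floor_add_one _

lemma dimH_avoid_le (b k : ℕ) (hb : 3 ≤ b) (hk : 1 ≤ k) (y r : ℕ → ℝ) (N : ℕ)
    (ht : ∀ n, N ≤ n → ∃ u : ℕ, u + 1 ≤ b^k ∧
      Set.Ico ((u:ℝ)/(b:ℝ)^k) (((u:ℝ)+1)/(b:ℝ)^k) ⊆ Metric.ball (y n) (r n)) :
    dimH {x : ℝ | x ∈ Set.Ico (0:ℝ) 1 ∧
        ∀ n, N ≤ n → (Tmap b)^[n] x ∉ Metric.ball (y n) (r n)}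
      ≤ ENNReal.ofReal (Real.logb ((b:ℝ)^k) ((b:ℝ)^k - 1/2)) := by
  classical
  choose u hu1 hu2 using ht
  set M : ℕ := b ^ k with hMdef
  have hMcast : ((M:ℝ)) = (b:ℝ)^k := by rw [hMdef]; push_cast; ring
  have hM3 : 3 ≤ M := le_trans hb (Nat.le_self_pow (by omega) b)
  have hMR : (3:ℝ) ≤ (M:ℝ) := by exact_mod_cast hM3
  set s : ℝ := Real.logb ((b:ℝ)^k) ((b:ℝ)^k - 1/2) with hsdef
  have hs0 : 0 < s := Real.logb_pos (by rw [← hMcast]; linarith) (by rw [← hMcast]; linarith)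
  have hMs : ((M:ℝ)) ^ s = (M:ℝ) - 1/2 := by
    rw [hMcast, hsdef]
    exact Real.rpow_logb (by rw [← hMcast]; linarith) (by rw [← hMcast]; linarith)
      (by rw [← hMcast]; linarith)
  set tt : ℕ → ℕ := fun m => u (N + m*k) (Nat.le_add_right _ _) with htt
  set A : ℕ → Finset ℕ := fun m => Nat.rec (Finset.range (b^N))
    (fun m' Am => (Am ×ˢ ((Finset.range M).erase (tt m'))).image fun p => p.1 * M + p.2) m
    with hA
  have hAcard : ∀ m, (A m).card ≤ b^N * (M-1)^m := by
    intro m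
    induction m with
    | zero => simp [hA]
    | succ m ih =>
      have h1 : (A (m+1)).card ≤ (A m).card * (M-1) := by
        refine le_trans Finset.card_image_le ?_
        have hmem' : tt m ∈ Finset.range M := Finset.mem_range.mpr
          (by show u (N + m*k) (Nat.le_add_right _ _) < M
              have := hu1 (N + m*k) (Nat.le_add_right _ _); omega)
        rw [Finset.card_product, Finset.card_erase_of_mem hmem', Finset.card_range]
      calc (A (m+1)).card ≤ (A m).card * (M-1) := h1
        _ ≤ (b^N * (M-1)^m) * (M-1) := Nat.mul_le_mul_right _ ih
        _ = b^N * (M-1)^(m+1) := by ring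
  set S := {x : ℝ | x ∈ Set.Ico (0:ℝ) 1 ∧
      ∀ n, N ≤ n → (Tmap b)^[n] x ∉ Metric.ball (y n) (r n)} with hS
  have hmem : ∀ x ∈ S, ∀ m, (⌊x * (b:ℝ)^(N + m*k)⌋).toNat ∈ A m := by
    rintro x ⟨hx, havoid⟩ m
    induction m with
    | zero =>
      have := floor_lt_of_mem b hb hx N
      simpa [hA] using this
    | succ m ih =>
      have hstep : N + (m+1)*k = (N + m*k) + k := by ring
      rw [hstep, floor_split b hb x hx (N + m*k) k]
      set g : ℕ := (⌊Int.fract (x * (b:ℝ)^(N+m*k)) * (b:ℝ)^k⌋).toNat with hg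
      have hfr : Int.fract (x * (b:ℝ)^(N+m*k)) ∈ Set.Ico (0:ℝ) 1 :=
        ⟨Int.fract_nonneg _, Int.fract_lt_one _⟩
      have hgM : g < M := by
        have := floor_lt_of_mem b hb hfr k
        omega
      have hgt : g ≠ tt m := by
        intro hEq
        apply havoid (N + m*k) (Nat.le_add_right _ _)
        rw [tmap_iterate b x hx]
        have hsub := hu2 (N + m*k) (Nat.le_add_right _ _)
        apply hsub
        have hmg := mem_grid b hb hfr k
        have heq2 : u (N + m*k) (Nat.le_add_right _ _) = g := hEq.symm
        rw [heq2]
        exact hmg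
      exact Finset.mem_image.mpr ⟨((⌊x * (b:ℝ)^(N+m*k)⌋).toNat, g),
        Finset.mem_product.mpr ⟨ih, Finset.mem_erase.mpr ⟨hgt, Finset.mem_range.mpr hgM⟩⟩, rfl⟩
  set c : ℕ → ℝ := fun m => ((b:ℝ)^(N + m*k))⁻¹ with hc
  have hcpos : ∀ m, 0 < c m := fun m => by rw [hc]; positivity
  set TT : ℕ → ℕ → Set ℝ := fun m j =>
    if j ∈ A m then Set.Ico ((j:ℝ)/(b:ℝ)^(N+m*k)) (((j:ℝ)+1)/(b:ℝ)^(N+m*k)) else ∅ with hTT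
  have hdiff : ∀ m (j : ℕ), ((j:ℝ)+1)/(b:ℝ)^(N+m*k) - (j:ℝ)/(b:ℝ)^(N+m*k) = c m := by
    intro m j
    rw [hc]; dsimp only
    have hB : (0:ℝ) < (b:ℝ)^(N+m*k) := by positivity
    field_simp
    ring
  have hdiam : ∀ m (j : ℕ), EMetric.diam (TT m j) ≤ ENNReal.ofReal (c m) := by
    intro m j
    rw [hTT]; dsimp only; split_ifs
    · rw [EMetric.diam, Real.ediam_Ico, hdiff m j]
    · simp [EMetric.diam]
  have hrtend : Tendsto (fun m => ENNReal.ofReal (c m)) atTop (𝓝 0) := by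
    rw [← ENNReal.ofReal_zero]
    apply ENNReal.tendsto_ofReal
    have h1 : Tendsto (fun m : ℕ => N + m*k) atTop atTop := by
      apply tendsto_atTop_mono (f := fun m : ℕ => m)
      · intro m
        calc m = m * 1 := (mul_one m).symm
          _ ≤ m * k := Nat.mul_le_mul_left m hk
          _ ≤ N + m * k := Nat.le_add_left _ _
      · exact tendsto_id
    have h2 : Tendsto (fun L : ℕ => ((b:ℝ)⁻¹)^L) atTop (𝓝 0) := by
      apply tendsto_pow_atTop_nhds_zero_of_lt_one (by positivity)
      rw [inv_lt_one_iff₀]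
      right
      exact_mod_cast by omega
    exact (h2.comp h1).congr (fun m => by simp [Function.comp, hc, inv_pow])
  have hcover : ∀ m, S ⊆ ⋃ j : ℕ, TT m j := by
    intro m x hxS
    refine Set.mem_iUnion.mpr ⟨(⌊x * (b:ℝ)^(N+m*k)⌋).toNat, ?_⟩
    rw [hTT]; dsimp only
    rw [if_pos (hmem x hxS m)]
    exact mem_grid b hb hxS.1 (N+m*k)
  have hμ : μH[s] S ≤ liminf (fun m => ∑' j : ℕ, EMetric.diam (TT m j) ^ s) atTop :=
    MeasureTheory.Measure.hausdorffMeasure_le_liminf_tsum s S (fun m => ENNReal.ofReal (c m)) hrtend TT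
      (Filter.Eventually.of_forall hdiam) (Filter.Eventually.of_forall hcover)
  set q : ℝ := ((M:ℝ) - 1) / ((M:ℝ) - 1/2) with hq
  have hq0 : 0 ≤ q := by rw [hq]; apply div_nonneg <;> linarith
  have hq1 : q < 1 := by rw [hq, div_lt_one (by linarith)]; linarith
  set C : ℝ := (b:ℝ)^N * (((b:ℝ)^N)⁻¹) ^ s with hC
  have hterm : ∀ m, (∑' j : ℕ, EMetric.diam (TT m j) ^ s) ≤ ENNReal.ofReal (C * q^m) := by
    intro m
    have hzero : ∀ j ∉ A m, EMetric.diam (TT m j) ^ s = 0 := by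
      intro j hj
      rw [hTT]; dsimp only; rw [if_neg hj, EMetric.diam, EMetric.diam_empty, ENNReal.zero_rpow_of_pos hs0]
    rw [tsum_eq_sum hzero]
    have hsummand : ∀ j ∈ A m, EMetric.diam (TT m j) ^ s = ENNReal.ofReal ((c m)^s) := by
      intro j hj
      rw [hTT]; dsimp only; rw [if_pos hj, EMetric.diam, Real.ediam_Ico, hdiff m j,
        ← ENNReal.ofReal_rpow_of_pos (hcpos m)]
    rw [Finset.sum_congr rfl hsummand, Finset.sum_const, nsmul_eq_mul]
    have hcard' : ((A m).card : ℝ) ≤ (b:ℝ)^N * ((M:ℝ)-1)^m := by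
      have h1 := hAcard m
      have hcast : (((b^N * (M-1)^m : ℕ)) : ℝ) = (b:ℝ)^N * ((M:ℝ)-1)^m := by
        push_cast [Nat.cast_sub (by omega : 1 ≤ M)]
        ring
      calc ((A m).card : ℝ) ≤ ((b^N * (M-1)^m : ℕ) : ℝ) := by exact_mod_cast h1
        _ = _ := hcast
    have hcs : (c m) ^ s = (((b:ℝ)^N)⁻¹)^s * (((M:ℝ) - 1/2)⁻¹)^m := by
      have e1 : c m = ((b:ℝ)^N)⁻¹ * (((M:ℝ))⁻¹)^m := by
        rw [hc]; dsimp only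
        rw [pow_add, mul_comm m k, pow_mul, mul_inv, hMcast, inv_pow]
      rw [e1, Real.mul_rpow (by positivity) (by positivity)]
      congr 1
      rw [← Real.rpow_natCast ((M:ℝ)⁻¹) m, ← Real.rpow_mul (by positivity),
        mul_comm (m:ℝ) s, Real.rpow_mul (by positivity), Real.rpow_natCast]
      congr 1
      rw [Real.inv_rpow (by positivity), hMs]
    have hfinal : ((A m).card : ℝ) * (c m)^s ≤ C * q^m := by
      calc ((A m).card : ℝ) * (c m)^s
          ≤ ((b:ℝ)^N * ((M:ℝ)-1)^m) * ((((b:ℝ)^N)⁻¹)^s * (((M:ℝ)-1/2)⁻¹)^m) := by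
            rw [hcs]
            refine mul_le_mul_of_nonneg_right hcard' (mul_nonneg
              (Real.rpow_nonneg (by positivity) s)
              (pow_nonneg (inv_nonneg.mpr (by linarith)) m))
        _ = C * q^m := by
            have hqm : q^m = ((M:ℝ)-1)^m * (((M:ℝ)-1/2)⁻¹)^m := by
              rw [hq, div_eq_mul_inv, mul_pow]
            rw [hC, hqm]; ring
    calc ((A m).card : ℝ≥0∞) * ENNReal.ofReal ((c m)^s)
        = ENNReal.ofReal (((A m).card : ℝ) * (c m)^s) := by
          rw [ENNReal.ofReal_mul (by positivity), ENNReal.ofReal_natCast]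
      _ ≤ ENNReal.ofReal (C * q^m) := ENNReal.ofReal_le_ofReal hfinal
  have htend : Tendsto (fun m : ℕ => ENNReal.ofReal (C * q^m)) atTop (𝓝 0) := by
    rw [← ENNReal.ofReal_zero]
    apply ENNReal.tendsto_ofReal
    have h1 := (tendsto_pow_atTop_nhds_zero_of_lt_one hq0 hq1).const_mul C
    simpa using h1
  have hlim : liminf (fun m => ∑' j : ℕ, EMetric.diam (TT m j) ^ s) atTop ≤ 0 :=
    calc liminf (fun m => ∑' j : ℕ, EMetric.diam (TT m j) ^ s) atTop
        ≤ liminf (fun m : ℕ => ENNReal.ofReal (C * q^m)) atTop :=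
          liminf_le_liminf (Filter.Eventually.of_forall hterm)
      _ = 0 := htend.liminf_eq
  have hμ0 : μH[s] S = 0 := le_antisymm (hμ.trans hlim) zero_le
  have hd : dimH S ≤ (s.toNNReal : ℝ≥0∞) := by
    apply dimH_le_of_hausdorffMeasure_ne_top
    rw [Real.coe_toNNReal s hs0.le, hμ0]
    exact ENNReal.zero_ne_top
  simpa [ENNReal.ofReal] using hd


/-- **Theorem 1.4 (ii).** If the liminf set `K({B_n})` has full Hausdorff dimension,
then `liminf r_n = 0`. -/
theorem liminf_radius_eq_zero_of_dimH_eq_one (b : ℕ) (hb : 3 ≤ b)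
    (y : ℕ → ℝ) (hy : ∀ n, y n ∈ Set.Ico (0 : ℝ) 1)
    (r : ℕ → ℝ) (hr : ∀ n, 0 < r n)
    (hdim : dimH { x : ℝ | x ∈ Set.Ico (0 : ℝ) 1 ∧
        ∀ᶠ n in Filter.atTop, (Tmap b)^[n] x ∉ Metric.ball (y n) (r n) } = 1) :
    Filter.liminf r Filter.atTop = 0 := by
  by_contra hL
  have hbR : (1:ℝ) < (b:ℝ) := by exact_mod_cast by omega
  -- Step 1: find a positive eventual lower bound for r
  set Sr := {a : ℝ | ∀ᶠ n in atTop, a ≤ r n} with hSr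
  have h0S : (0:ℝ) ∈ Sr := Filter.Eventually.of_forall (fun n => (hr n).le)
  have hlim : liminf r atTop = sSup Sr := Filter.liminf_eq
  have hbdd : BddAbove Sr := by
    by_contra hnb
    exact hL (hlim.trans (Real.sSup_of_not_bddAbove hnb))
  have hLpos : 0 < liminf r atTop :=
    lt_of_le_of_ne (hlim ▸ le_csSup hbdd h0S) (Ne.symm hL)
  set ε : ℝ := liminf r atTop / 2 with hε
  have hε0 : 0 < ε := by rw [hε]; linarith
  obtain ⟨a, haS, haε⟩ : ∃ a ∈ Sr, ε < a := by
    apply exists_lt_of_lt_csSup ⟨0, h0S⟩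
    rw [← hlim, hε]; linarith
  have hev : ∀ᶠ n in atTop, ε ≤ r n := haS.mono (fun n hn => le_trans haε.le hn)
  obtain ⟨N1, hN1⟩ := (Filter.eventually_atTop).mp hev
  -- Step 2: choose the cylinder depth k
  set δ : ℝ := min ε (1/2) with hδ
  have hδ0 : 0 < δ := lt_min hε0 (by norm_num)
  have hδhalf : δ ≤ 1/2 := min_le_right _ _
  have hδε : δ ≤ ε := min_le_left _ _
  obtain ⟨k0, hk0⟩ := pow_unbounded_of_one_lt (4/δ) hbR
  set k : ℕ := k0 + 1 with hkdef
  have hk1 : 1 ≤ k := by omega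
  have hkk : 4/δ < (b:ℝ)^k := lt_of_lt_of_le hk0 (pow_le_pow_right₀ (by linarith) (Nat.le_succ _))
  have hBpos : (0:ℝ) < (b:ℝ)^k := by positivity
  have hb4 : (4:ℝ)/(b:ℝ)^k ≤ δ := by
    rw [div_lt_iff₀ hδ0] at hkk
    rw [div_le_iff₀ hBpos]
    nlinarith
  -- Step 3: each tail set has small dimension
  set s : ℝ := Real.logb ((b:ℝ)^k) ((b:ℝ)^k - 1/2) with hs
  have hdimj : ∀ j : ℕ, dimH {x : ℝ | x ∈ Set.Ico (0:ℝ) 1 ∧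
      ∀ n, (N1+j) ≤ n → (Tmap b)^[n] x ∉ Metric.ball (y n) (r n)} ≤ ENNReal.ofReal s := by
    intro j
    apply dimH_avoid_le b k hb hk1 y r (N1+j)
    intro n hn
    exact grid_subset_ball b k hb hδ0 hδhalf
      (le_trans hδε (hN1 n (by omega))) hb4 (hy n)
  -- Step 4: the liminf set is contained in the union of tail sets
  have hsub : {x : ℝ | x ∈ Set.Ico (0:ℝ) 1 ∧
        ∀ᶠ n in Filter.atTop, (Tmap b)^[n] x ∉ Metric.ball (y n) (r n)}
      ⊆ ⋃ j : ℕ, {x : ℝ | x ∈ Set.Ico (0:ℝ) 1 ∧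
        ∀ n, (N1+j) ≤ n → (Tmap b)^[n] x ∉ Metric.ball (y n) (r n)} := by
    rintro x ⟨hx, hevx⟩
    rcases (Filter.eventually_atTop).mp hevx with ⟨N, hN⟩
    exact Set.mem_iUnion.mpr ⟨N, hx, fun n hn => hN n (by omega)⟩
  -- Step 5: contradiction
  have hd1 : (1:ℝ≥0∞) ≤ ENNReal.ofReal s := by
    rw [← hdim]
    calc dimH {x : ℝ | x ∈ Set.Ico (0:ℝ) 1 ∧
          ∀ᶠ n in Filter.atTop, (Tmap b)^[n] x ∉ Metric.ball (y n) (r n)}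
        ≤ dimH (⋃ j : ℕ, {x : ℝ | x ∈ Set.Ico (0:ℝ) 1 ∧
          ∀ n, (N1+j) ≤ n → (Tmap b)^[n] x ∉ Metric.ball (y n) (r n)}) := dimH_mono hsub
      _ = ⨆ j : ℕ, dimH {x : ℝ | x ∈ Set.Ico (0:ℝ) 1 ∧
          ∀ n, (N1+j) ≤ n → (Tmap b)^[n] x ∉ Metric.ball (y n) (r n)} := dimH_iUnion _
      _ ≤ ENNReal.ofReal s := iSup_le hdimj
  have hBR : (3:ℝ) ≤ (b:ℝ)^k :=
    le_trans (by exact_mod_cast hb) (le_self_pow₀ (by linarith) (by omega))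
  have hs1 : s < 1 := by
    rw [hs]
    calc Real.logb ((b:ℝ)^k) ((b:ℝ)^k - 1/2)
        < Real.logb ((b:ℝ)^k) ((b:ℝ)^k) :=
          Real.logb_lt_logb (by linarith) (by linarith) (by linarith)
      _ = 1 := Real.logb_self_eq_one (by linarith)
  exact absurd hd1 (not_le.mpr (ENNReal.ofReal_lt_one.mpr hs1))

end Paper
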